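/- arXiv:1412.7025 — 3 statements merged into one kernel-verified Lean document; each statement's English description precedes it below -/
import Mathlib

section
/- Let G = (A ⊔ B, E) be a finite bipartite graph with nonempty edge set E ⊆ A × B. Then there exist nonempty subsets A' ⊆ A and B' ⊆ B such that in the induced subgraph G' = (A' ⊔ B', E'): every vertex of A' has degree at least |E|/(4|A|), every vertex of B' has degree at least |E|/(4|B|), and |E'| ≥ |E|/2. -/
open scoped Classical

private theorem splitA {α β : Type*} (A' : Finset α) (B' : Finset β) (E : Finset (α × β))
    {a : α} (ha : a ∈ A') :
    (E.filter (fun e => e.1 ∈ A' ∧ e.2 ∈ B')).card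
      = (E.filter (fun e => e.1 = a ∧ e.2 ∈ B')).card
        + (E.filter (fun e => e.1 ∈ A'.erase a ∧ e.2 ∈ B')).card := by
  rw [← Finset.card_union_of_disjoint]
  · congr 1
    ext e
    simp only [Finset.mem_union, Finset.mem_filter, Finset.mem_erase]
    constructor
    · rintro ⟨hEe, h1, h2⟩
      by_cases h : e.1 = a
      · exact Or.inl ⟨hEe, h, h2⟩
      · exact Or.inr ⟨hEe, ⟨h, h1⟩, h2⟩
    · rintro (⟨hEe, h1, h2⟩ | ⟨hEe, ⟨_, h1⟩, h2⟩)
      · exact ⟨hEe, h1 ▸ ha, h2⟩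
      · exact ⟨hEe, h1, h2⟩
  · rw [Finset.disjoint_left]
    rintro e he he'
    simp only [Finset.mem_filter, Finset.mem_erase] at he he'
    exact he'.2.1.1 he.2.1

private theorem splitB {α β : Type*} (A' : Finset α) (B' : Finset β) (E : Finset (α × β))
    {b : β} (hb : b ∈ B') :
    (E.filter (fun e => e.1 ∈ A' ∧ e.2 ∈ B')).card
      = (E.filter (fun e => e.2 = b ∧ e.1 ∈ A')).card
        + (E.filter (fun e => e.1 ∈ A' ∧ e.2 ∈ B'.erase b)).card := by
  rw [← Finset.card_union_of_disjoint]
  · congr 1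
    ext e
    simp only [Finset.mem_union, Finset.mem_filter, Finset.mem_erase]
    constructor
    · rintro ⟨hEe, h1, h2⟩
      by_cases h : e.2 = b
      · exact Or.inl ⟨hEe, h, h1⟩
      · exact Or.inr ⟨hEe, h1, h, h2⟩
    · rintro (⟨hEe, h1, h2⟩ | ⟨hEe, h1, h2, h3⟩)
      · exact ⟨hEe, h2, h1 ▸ hb⟩
      · exact ⟨hEe, h1, h3⟩
  · rw [Finset.disjoint_left]
    rintro e he he'
    simp only [Finset.mem_filter, Finset.mem_erase] at he he'
    exact he'.2.2.1 he.2.1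

private theorem cleanup {α β : Type*} (A : Finset α) (B : Finset β) (E : Finset (α × β))
    (cA cB : ℝ) (hcA : 0 ≤ cA) (hcB : 0 ≤ cB) :
    ∀ n : ℕ, ∀ A' : Finset α, A' ⊆ A → ∀ B' : Finset β, B' ⊆ B →
      A'.card + B'.card ≤ n →
      (E.card : ℝ) / 2 + cA * A'.card + cB * B'.card
        ≤ ((E.filter (fun e => e.1 ∈ A' ∧ e.2 ∈ B')).card : ℝ) →
      ∃ A'' ⊆ A', ∃ B'' ⊆ B',
        (∀ a ∈ A'', cA ≤ ((E.filter (fun e => e.1 = a ∧ e.2 ∈ B'')).card : ℝ)) ∧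
        (∀ b ∈ B'', cB ≤ ((E.filter (fun e => e.2 = b ∧ e.1 ∈ A'')).card : ℝ)) ∧
        (E.card : ℝ) / 2 ≤ ((E.filter (fun e => e.1 ∈ A'' ∧ e.2 ∈ B'')).card : ℝ) := by
  intro n
  induction n with
  | zero =>
      intro A' hA B' hB hcard hcount
      have hA' : A' = ∅ := Finset.card_eq_zero.mp (by omega)
      have hB' : B' = ∅ := Finset.card_eq_zero.mp (by omega)
      subst hA' hB'
      refine ⟨∅, Finset.Subset.refl _, ∅, Finset.Subset.refl _, ?_, ?_, ?_⟩
      · intro a ha; simp at ha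
      · intro b hb; simp at hb
      · simpa using hcount
  | succ n ih =>
      intro A' hA B' hB hcard hcount
      by_cases hbadA : ∃ a ∈ A', ((E.filter (fun e => e.1 = a ∧ e.2 ∈ B')).card : ℝ) < cA
      · obtain ⟨a, haA, hdeg⟩ := hbadA
        have hsplit := splitA A' B' E haA
        have hc1 : (A'.erase a).card + 1 = A'.card := Finset.card_erase_add_one haA
        have hcR : ((A'.erase a).card : ℝ) + 1 = (A'.card : ℝ) := by exact_mod_cast hc1
        obtain ⟨A'', hA'', B'', hB'', h1, h2, h3⟩ :=
          ih (A'.erase a) ((Finset.erase_subset _ _).trans hA) B' hB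
            (by omega)
            (by
              have hsR : ((E.filter (fun e => e.1 ∈ A' ∧ e.2 ∈ B')).card : ℝ)
                  = ((E.filter (fun e => e.1 = a ∧ e.2 ∈ B')).card : ℝ)
                    + ((E.filter (fun e => e.1 ∈ A'.erase a ∧ e.2 ∈ B')).card : ℝ) := by
                exact_mod_cast hsplit
              nlinarith [hcount, hdeg, hcR])
        exact ⟨A'', hA''.trans (Finset.erase_subset _ _), B'', hB'', h1, h2, h3⟩
      · by_cases hbadB : ∃ b ∈ B', ((E.filter (fun e => e.2 = b ∧ e.1 ∈ A')).card : ℝ) < cB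
        · obtain ⟨b, hbB, hdeg⟩ := hbadB
          have hsplit := splitB A' B' E hbB
          have hc1 : (B'.erase b).card + 1 = B'.card := Finset.card_erase_add_one hbB
          have hcR : ((B'.erase b).card : ℝ) + 1 = (B'.card : ℝ) := by exact_mod_cast hc1
          obtain ⟨A'', hA'', B'', hB'', h1, h2, h3⟩ :=
            ih A' hA (B'.erase b) ((Finset.erase_subset _ _).trans hB)
              (by omega)
              (by
                have hsR : ((E.filter (fun e => e.1 ∈ A' ∧ e.2 ∈ B')).card : ℝ)
                    = ((E.filter (fun e => e.2 = b ∧ e.1 ∈ A')).card : ℝ)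
                      + ((E.filter (fun e => e.1 ∈ A' ∧ e.2 ∈ B'.erase b)).card : ℝ) := by
                  exact_mod_cast hsplit
                nlinarith [hcount, hdeg, hcR])
          exact ⟨A'', hA'', B'', hB''.trans (Finset.erase_subset _ _), h1, h2, h3⟩
        · push_neg at hbadA hbadB
          refine ⟨A', Finset.Subset.refl _, B', Finset.Subset.refl _, hbadA, hbadB, ?_⟩
          nlinarith [hcount, mul_nonneg hcA (Nat.cast_nonneg A'.card),
            mul_nonneg hcB (Nat.cast_nonneg B'.card)]

theorem stmt0 {α β : Type*} (A : Finset α) (B : Finset β) (E : Finset (α × β))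
    (hE : E ⊆ A ×ˢ B) (hne : E.Nonempty) :
    ∃ A' ⊆ A, ∃ B' ⊆ B, A'.Nonempty ∧ B'.Nonempty ∧
      (∀ a ∈ A', (E.card : ℝ) / (4 * A.card) ≤
        ((E.filter (fun e => e.1 = a ∧ e.2 ∈ B')).card : ℝ)) ∧
      (∀ b ∈ B', (E.card : ℝ) / (4 * B.card) ≤
        ((E.filter (fun e => e.2 = b ∧ e.1 ∈ A')).card : ℝ)) ∧
      (E.card : ℝ) / 2 ≤ ((E.filter (fun e => e.1 ∈ A' ∧ e.2 ∈ B')).card : ℝ) := by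
  obtain ⟨e0, he0⟩ := hne
  have he0' := hE he0
  rw [Finset.mem_product] at he0'
  have hA0 : (0 : ℝ) < A.card := by
    exact_mod_cast Finset.card_pos.mpr ⟨e0.1, he0'.1⟩
  have hB0 : (0 : ℝ) < B.card := by
    exact_mod_cast Finset.card_pos.mpr ⟨e0.2, he0'.2⟩
  have hE0 : (0 : ℝ) < E.card := by
    exact_mod_cast Finset.card_pos.mpr ⟨e0, he0⟩
  set cA : ℝ := (E.card : ℝ) / (4 * A.card) with hcAdef
  set cB : ℝ := (E.card : ℝ) / (4 * B.card) with hcBdef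
  have hcA : 0 ≤ cA := by positivity
  have hcB : 0 ≤ cB := by positivity
  have hfull : E.filter (fun e => e.1 ∈ A ∧ e.2 ∈ B) = E := by
    apply Finset.filter_true_of_mem
    intro e he
    have := hE he
    rw [Finset.mem_product] at this
    exact this
  obtain ⟨A'', hA'', B'', hB'', h1, h2, h3⟩ :=
    cleanup A B E cA cB hcA hcB (A.card + B.card) A (Finset.Subset.refl _)
      B (Finset.Subset.refl _) le_rfl
      (by
        rw [hfull]
        have e1 : cA * A.card = (E.card : ℝ) / 4 := by
          rw [hcAdef]; field_simp
        have e2 : cB * B.card = (E.card : ℝ) / 4 := by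
          rw [hcBdef]; field_simp
        rw [e1, e2]; ring_nf; linarith)
  have hne' : (E.filter (fun e => e.1 ∈ A'' ∧ e.2 ∈ B'')).Nonempty := by
    rw [← Finset.card_pos]
    have : (0 : ℝ) < ((E.filter (fun e => e.1 ∈ A'' ∧ e.2 ∈ B'')).card : ℝ) := by
      linarith
    exact_mod_cast this
  obtain ⟨e1, he1⟩ := hne'
  rw [Finset.mem_filter] at he1
  exact ⟨A'', hA'', B'', hB'', ⟨e1.1, he1.2.1⟩, ⟨e1.2, he1.2.2⟩, h1, h2, h3⟩
end

section
/- Suppose every line in a finite family L in ℝ^d contains at least r points of a finite set P, a polynomial f of degree m < r/2 has cells C₁, …, C_M partitioning the complement of its zero set, each line meets at most m cells, and a line ℓ ∈ L satisfies |ℓ ∩ P ∩ C_i| ≤ 1 for all i. Then ℓ contains more than m points of P in the zero set of f, and hence f vanishes identically on ℓ. -/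
open scoped Classical
open Matrix

/-- The line through `a` with direction `v` in `ℝ^d`. -/
def lineSet {d : ℕ} (a v : Fin d → ℝ) : Set (Fin d → ℝ) := {x | ∃ t : ℝ, x = a + t • v}

lemma natDegree_eval₂_line {d : ℕ} (f : MvPolynomial (Fin d) ℝ) (a v : Fin d → ℝ) :
    (MvPolynomial.eval₂ Polynomial.C
      (fun i => Polynomial.C (a i) + Polynomial.X * Polynomial.C (v i)) f).natDegree
      ≤ f.totalDegree := by
  rw [MvPolynomial.eval₂_eq]
  apply Polynomial.natDegree_sum_le_of_forall_le
  intro s hs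
  refine (Polynomial.natDegree_mul_le).trans ?_
  simp only [Polynomial.natDegree_C, zero_add]
  refine (Polynomial.natDegree_prod_le _ _).trans ?_
  calc ∑ i ∈ s.support, ((Polynomial.C (a i) + Polynomial.X * Polynomial.C (v i)) ^ s i).natDegree
      ≤ ∑ i ∈ s.support, s i := by
        apply Finset.sum_le_sum
        intro i _
        refine (Polynomial.natDegree_pow_le).trans ?_
        have h1 : (Polynomial.C (a i) + Polynomial.X * Polynomial.C (v i)).natDegree ≤ 1 := by
          refine (Polynomial.natDegree_add_le _ _).trans ?_
          simp [Polynomial.natDegree_C]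
          exact (Polynomial.natDegree_mul_le).trans (by simp)
        calc s i * (Polynomial.C (a i) + Polynomial.X * Polynomial.C (v i)).natDegree
            ≤ s i * 1 := Nat.mul_le_mul_left _ h1
          _ = s i := Nat.mul_one _
    _ ≤ f.totalDegree := MvPolynomial.le_totalDegree hs

lemma eval_line_eq {d : ℕ} (f : MvPolynomial (Fin d) ℝ) (a v : Fin d → ℝ) (t : ℝ) :
    MvPolynomial.eval (a + t • v) f =
      Polynomial.eval t (MvPolynomial.eval₂ Polynomial.C
        (fun i => Polynomial.C (a i) + Polynomial.X * Polynomial.C (v i)) f) := by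
  induction f using MvPolynomial.induction_on with
  | C c => simp
  | add p q hp hq => simp [hp, hq]
  | mul_X p i hp =>
      simp only [MvPolynomial.eval₂_mul, MvPolynomial.eval₂_X, MvPolynomial.eval_mul,
        MvPolynomial.eval_X, Polynomial.eval_mul, Polynomial.eval_add, Polynomial.eval_C,
        Polynomial.eval_X, Pi.add_apply, Pi.smul_apply, smul_eq_mul, hp]

theorem stmt10 {d m M r : ℕ} (P : Finset (Fin d → ℝ))
    (L : Finset ((Fin d → ℝ) × (Fin d → ℝ)))
    (hrich : ∀ ℓ ∈ L, r ≤ (P.filter (fun x => x ∈ lineSet ℓ.1 ℓ.2)).card)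
    (f : MvPolynomial (Fin d) ℝ) (hdeg : f.totalDegree ≤ m) (hmr : 2 * m < r)
    (cells : Fin M → Set (Fin d → ℝ))
    (hcover : (⋃ i, cells i) = {x | MvPolynomial.eval x f ≠ 0})
    (ℓ : (Fin d → ℝ) × (Fin d → ℝ)) (hℓ : ℓ ∈ L) (hv : ℓ.2 ≠ 0)
    (hmeets : (Finset.univ.filter
      (fun i : Fin M => (lineSet ℓ.1 ℓ.2 ∩ cells i).Nonempty)).card ≤ m)
    (hone : ∀ i, (P.filter (fun x => x ∈ lineSet ℓ.1 ℓ.2 ∩ cells i)).card ≤ 1) :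
    m < (P.filter
        (fun x => x ∈ lineSet ℓ.1 ℓ.2 ∧ MvPolynomial.eval x f = 0)).card ∧
      ∀ t : ℝ, MvPolynomial.eval (ℓ.1 + t • ℓ.2) f = 0 := by
  classical
  -- split the points on the line by whether f vanishes
  have hsplit : (P.filter (fun x => x ∈ lineSet ℓ.1 ℓ.2 ∧ MvPolynomial.eval x f = 0)).card
      + (P.filter (fun x => x ∈ lineSet ℓ.1 ℓ.2 ∧ MvPolynomial.eval x f ≠ 0)).card
      = (P.filter (fun x => x ∈ lineSet ℓ.1 ℓ.2)).card := by
    rw [← Finset.filter_filter, ← Finset.filter_filter]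
    exact Finset.card_filter_add_card_filter_not (fun x => MvPolynomial.eval x f = 0)
  -- the nonvanishing points are covered by the cells meeting the line
  have hsub : P.filter (fun x => x ∈ lineSet ℓ.1 ℓ.2 ∧ MvPolynomial.eval x f ≠ 0)
      ⊆ (Finset.univ.filter (fun i : Fin M => (lineSet ℓ.1 ℓ.2 ∩ cells i).Nonempty)).biUnion
        (fun i => P.filter (fun x => x ∈ lineSet ℓ.1 ℓ.2 ∩ cells i)) := by
    intro x hx
    simp only [Finset.mem_filter] at hx
    obtain ⟨hxP, hxl, hxf⟩ := hx
    have : x ∈ ⋃ i, cells i := by rw [hcover]; exact hxf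
    obtain ⟨i, hi⟩ := Set.mem_iUnion.1 this
    refine Finset.mem_biUnion.2 ⟨i, ?_, ?_⟩
    · exact Finset.mem_filter.2 ⟨Finset.mem_univ _, ⟨x, hxl, hi⟩⟩
    · exact Finset.mem_filter.2 ⟨hxP, hxl, hi⟩
  have hnz : (P.filter (fun x => x ∈ lineSet ℓ.1 ℓ.2 ∧ MvPolynomial.eval x f ≠ 0)).card ≤ m := by
    refine (Finset.card_le_card hsub).trans ?_
    refine (Finset.card_biUnion_le).trans ?_
    calc ∑ i ∈ Finset.univ.filter (fun i : Fin M => (lineSet ℓ.1 ℓ.2 ∩ cells i).Nonempty),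
          (P.filter (fun x => x ∈ lineSet ℓ.1 ℓ.2 ∩ cells i)).card
        ≤ ∑ _i ∈ Finset.univ.filter (fun i : Fin M => (lineSet ℓ.1 ℓ.2 ∩ cells i).Nonempty), 1 :=
          Finset.sum_le_sum (fun i _ => hone i)
      _ ≤ m := by simpa using hmeets
  have hr := hrich ℓ hℓ
  have hmain : m < (P.filter
      (fun x => x ∈ lineSet ℓ.1 ℓ.2 ∧ MvPolynomial.eval x f = 0)).card := by omega
  refine ⟨hmain, ?_⟩
  -- the restriction of f to the line
  set g : Polynomial ℝ := MvPolynomial.eval₂ Polynomial.C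
    (fun i => Polynomial.C (ℓ.1 i) + Polynomial.X * Polynomial.C (ℓ.2 i)) f with hg
  have hkey : ∀ t : ℝ, MvPolynomial.eval (ℓ.1 + t • ℓ.2) f = Polynomial.eval t g :=
    fun t => eval_line_eq f ℓ.1 ℓ.2 t
  have hg0 : g = 0 := by
    by_contra hg0
    -- map vanishing points to roots of g
    set Z := P.filter (fun x => x ∈ lineSet ℓ.1 ℓ.2 ∧ MvPolynomial.eval x f = 0)
    have hinj : ∀ x ∈ Z, ∃ t : ℝ, x = ℓ.1 + t • ℓ.2 := by
      intro x hx
      exact (Finset.mem_filter.1 hx).2.1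
    set tOf : (Fin d → ℝ) → ℝ := fun x =>
      if h : ∃ t : ℝ, x = ℓ.1 + t • ℓ.2 then h.choose else 0
    have htOf : ∀ x ∈ Z, x = ℓ.1 + tOf x • ℓ.2 := by
      intro x hx
      have h := hinj x hx
      simp only [tOf, dif_pos h]
      exact h.choose_spec
    have hcard : Z.card ≤ g.roots.toFinset.card := by
      apply Finset.card_le_card_of_injOn tOf
      · intro x hx
        have hx' := (Finset.mem_filter.1 hx).2.2
        rw [Finset.mem_coe, Multiset.mem_toFinset, Polynomial.mem_roots hg0]
        show Polynomial.eval (tOf x) g = 0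
        rw [← hkey, ← htOf x hx]
        exact hx'
      · intro x hx y hy hxy
        rw [htOf x hx, htOf y hy, hxy]
    have hroots : g.roots.toFinset.card ≤ m := by
      calc g.roots.toFinset.card ≤ Multiset.card g.roots := Multiset.toFinset_card_le _
        _ ≤ g.natDegree := Polynomial.card_roots' g
        _ ≤ f.totalDegree := natDegree_eval₂_line f ℓ.1 ℓ.2
        _ ≤ m := hdeg
    omega
  intro t
  rw [hkey t, hg0, Polynomial.eval_zero]
end

section
/- Let g be a nonzero polynomial on ℝ^d of minimal degree among nonzero polynomials vanishing on every line of a finite family L, where each line of L contains at least r > deg g points of a finite set P. If some partial derivative ∂g/∂x_j is not identically zero and vanishes at every point of P lying on lines of L, then ∂g/∂x_j vanishes on every line of L, contradicting minimality; hence not every point of P on the lines of L can be a joint of L. -/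
noncomputable def lineComp {d : ℕ} (a v : Fin d → ℝ) :
    MvPolynomial (Fin d) ℝ →ₐ[ℝ] Polynomial ℝ :=
  MvPolynomial.aeval fun i => Polynomial.C (a i) + Polynomial.C (v i) * Polynomial.X

lemma lineComp_X {d : ℕ} (a v : Fin d → ℝ) (i : Fin d) :
    lineComp a v (MvPolynomial.X i) = Polynomial.C (a i) + Polynomial.C (v i) * Polynomial.X :=
  MvPolynomial.aeval_X _ i

lemma lineComp_C {d : ℕ} (a v : Fin d → ℝ) (c : ℝ) :
    lineComp a v (MvPolynomial.C c) = Polynomial.C c :=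
  MvPolynomial.aeval_C _ c

lemma lineComp_eval {d : ℕ} (a v : Fin d → ℝ) (g : MvPolynomial (Fin d) ℝ) (t : ℝ) :
    (lineComp a v g).eval t = MvPolynomial.eval (a + t • v) g := by
  induction g using MvPolynomial.induction_on with
  | C c => rw [lineComp_C]; simp
  | add p q hp hq => simp only [map_add, Polynomial.eval_add, hp, hq]
  | mul_X p i hp =>
      simp only [map_mul, Polynomial.eval_mul, hp, MvPolynomial.eval_mul, MvPolynomial.eval_X,
        lineComp_X]
      simp only [Polynomial.eval_add, Polynomial.eval_mul, Polynomial.eval_C, Polynomial.eval_X, Pi.add_apply, Pi.smul_apply, smul_eq_mul]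
      ring

lemma lineComp_natDegree_le {d : ℕ} (a v : Fin d → ℝ) (g : MvPolynomial (Fin d) ℝ) :
    (lineComp a v g).natDegree ≤ g.totalDegree := by
  conv_lhs => rw [g.as_sum]
  rw [map_sum]
  apply Polynomial.natDegree_sum_le_of_forall_le
  intro m hm
  rw [lineComp, MvPolynomial.aeval_monomial]
  refine (Polynomial.natDegree_mul_le).trans ?_
  have h1 : (algebraMap ℝ (Polynomial ℝ) (MvPolynomial.coeff m g)).natDegree = 0 :=
    Polynomial.natDegree_C _
  rw [h1, zero_add]
  refine (Polynomial.natDegree_prod_le _ _).trans ?_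
  refine le_trans ?_ (MvPolynomial.le_totalDegree hm)
  rw [Finsupp.sum]
  apply Finset.sum_le_sum
  intro i _
  refine (Polynomial.natDegree_pow_le).trans ?_
  have h2 : (Polynomial.C (a i) + Polynomial.C (v i) * Polynomial.X).natDegree ≤ 1 := by
    refine (Polynomial.natDegree_add_le _ _).trans ?_
    simp only [Polynomial.natDegree_C, max_le_iff]
    exact ⟨Nat.zero_le _, (Polynomial.natDegree_C_mul_le _ _).trans (by simp)⟩
  calc m i * (Polynomial.C (a i) + Polynomial.C (v i) * Polynomial.X).natDegree
      ≤ m i * 1 := Nat.mul_le_mul_left _ h2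
    _ = m i := Nat.mul_one _

open MvPolynomial in
lemma lineComp_derivative {d : ℕ} (a v : Fin d → ℝ) (g : MvPolynomial (Fin d) ℝ) :
    Polynomial.derivative (lineComp a v g) =
      lineComp a v (∑ i, MvPolynomial.C (v i) * MvPolynomial.pderiv i g) := by
  classical
  induction g using MvPolynomial.induction_on with
  | C c => simp [lineComp_C]
  | add p q hp hq =>
      rw [map_add, map_add, hp, hq, ← map_add]
      congr 1
      rw [← Finset.sum_add_distrib]
      exact Finset.sum_congr rfl fun j _ => by rw [map_add, mul_add]
  | mul_X p i hp =>
      have key : (∑ j, MvPolynomial.C (v j) * MvPolynomial.pderiv j (p * MvPolynomial.X i)) =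
          (∑ j, MvPolynomial.C (v j) * MvPolynomial.pderiv j p) * MvPolynomial.X i
            + MvPolynomial.C (v i) * p := by
        simp only [pderiv_mul, pderiv_X, mul_add, Finset.sum_add_distrib, Finset.sum_mul,
          mul_assoc]
        congr 1
        rw [Finset.sum_eq_single i]
        · simp
        · intro j _ hj; simp [Pi.single_eq_of_ne hj.symm]
        · simp
      rw [map_mul, Polynomial.derivative_mul, hp, lineComp_X, key]
      simp only [map_add, map_mul, lineComp_X, lineComp_C, Polynomial.derivative_add,
        Polynomial.derivative_C, Polynomial.derivative_mul, Polynomial.derivative_X,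
        zero_add, mul_one, mul_zero, add_zero]
      ring

open MvPolynomial Finsupp in
lemma pderiv_rep {d : ℕ} (i : Fin d) (g : MvPolynomial (Fin d) ℝ) :
    MvPolynomial.pderiv i g = ∑ s ∈ g.support,
      MvPolynomial.monomial (s - Finsupp.single i 1) (MvPolynomial.coeff s g * (s i : ℝ)) := by
  conv_lhs => rw [g.as_sum]
  rw [map_sum]
  exact Finset.sum_congr rfl fun s _ => pderiv_monomial

open MvPolynomial Finsupp in
lemma totalDegree_pderiv_lt {d : ℕ} (i : Fin d) {g : MvPolynomial (Fin d) ℝ}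
    (h : MvPolynomial.pderiv i g ≠ 0) :
    (MvPolynomial.pderiv i g).totalDegree < g.totalDegree := by
  classical
  have key : ∀ m ∈ (MvPolynomial.pderiv i g).support,
      (m.sum fun _ e => e) + 1 ≤ g.totalDegree := by
    intro m hm
    rw [MvPolynomial.mem_support_iff] at hm
    have hex : ∃ s ∈ g.support,
        MvPolynomial.coeff m (MvPolynomial.monomial (s - Finsupp.single i 1)
          (MvPolynomial.coeff s g * (s i : ℝ))) ≠ 0 := by
      by_contra hc
      push_neg at hc
      apply hm
      rw [pderiv_rep, MvPolynomial.coeff_sum]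
      exact Finset.sum_eq_zero hc
    obtain ⟨s, hs, hne⟩ := hex
    rw [MvPolynomial.coeff_monomial] at hne
    split_ifs at hne with he
    · have hsi : s i ≠ 0 := by
        intro h0; apply hne; rw [h0]; simp
      have hsm : s = m + Finsupp.single i 1 := by
        ext j
        by_cases hj : j = i
        · subst hj
          have := DFunLike.congr_fun he j
          simp only [Finsupp.tsub_apply, Finsupp.single_eq_same] at this
          simp only [Finsupp.add_apply, Finsupp.single_eq_same]
          omega
        · have := DFunLike.congr_fun he j
          simp only [Finsupp.tsub_apply, Finsupp.single_eq_of_ne' (Ne.symm hj)] at this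
          simp only [Finsupp.add_apply, Finsupp.single_eq_of_ne' (Ne.symm hj)]
          omega
      have hsum : (s.sum fun _ e => e) = (m.sum fun _ e => e) + 1 := by
        rw [hsm, Finsupp.sum_add_index' (fun _ => rfl) (fun _ _ _ => rfl),
          Finsupp.sum_single_index rfl]
      have := MvPolynomial.le_totalDegree hs
      omega
    · exact absurd rfl hne
  have hne : (MvPolynomial.pderiv i g).support.Nonempty :=
    MvPolynomial.support_nonempty.mpr h
  obtain ⟨m0, hm0⟩ := hne
  have h1 : 1 ≤ g.totalDegree := le_trans (by omega) (key m0 hm0)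
  rw [MvPolynomial.totalDegree]
  rw [Finset.sup_lt_iff (by rw [bot_eq_zero]; omega : (⊥ : ℕ) < g.totalDegree)]
  intro m hm
  have := key m hm
  omega

open MvPolynomial Finsupp in
lemma eq_C_of_totalDegree_eq_zero {d : ℕ} {g : MvPolynomial (Fin d) ℝ}
    (h : g.totalDegree = 0) : g = MvPolynomial.C (MvPolynomial.coeff 0 g) := by
  ext m
  obtain rfl | hm := eq_or_ne m 0
  · simp
  · rw [MvPolynomial.coeff_C, if_neg (Ne.symm hm)]
    apply MvPolynomial.coeff_eq_zero_of_totalDegree_lt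
    rw [h]
    obtain ⟨j, hj⟩ : ∃ j, m j ≠ 0 := by
      by_contra hc; push_neg at hc; exact hm (Finsupp.ext hc)
    exact Finset.sum_pos' (fun _ _ => Nat.zero_le _)
      ⟨j, Finsupp.mem_support_iff.mpr hj, by omega⟩

open MvPolynomial Finsupp in
lemma exists_pderiv_ne_zero {d : ℕ} {g : MvPolynomial (Fin d) ℝ}
    (h : g.totalDegree ≠ 0) : ∃ j, MvPolynomial.pderiv j g ≠ 0 := by
  classical
  -- find m in support with m j ≠ 0
  obtain ⟨m, hm, hmsum⟩ : ∃ m ∈ g.support, (m.sum fun _ e => e) ≠ 0 := by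
    by_contra hc
    push_neg at hc
    apply h
    rw [MvPolynomial.totalDegree]
    exact (Finset.sup_eq_bot_iff _ _).mpr hc
  obtain ⟨j, hj1, hj⟩ : ∃ j ∈ m.support, m j ≠ 0 := by
    rw [Finsupp.sum] at hmsum
    by_contra hc; push_neg at hc
    exact hmsum (Finset.sum_eq_zero hc)
  refine ⟨j, fun h0 => ?_⟩
  -- coeff (m - single j 1) (pderiv j g) = coeff m g * m j ≠ 0
  have hrep : MvPolynomial.pderiv j g = ∑ s ∈ g.support,
      MvPolynomial.monomial (s - Finsupp.single j 1) (MvPolynomial.coeff s g * (s j : ℝ)) := by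
    conv_lhs => rw [g.as_sum]
    rw [map_sum]
    exact Finset.sum_congr rfl fun s _ => pderiv_monomial
  have hco : MvPolynomial.coeff (m - Finsupp.single j 1) (MvPolynomial.pderiv j g)
      = MvPolynomial.coeff m g * (m j : ℝ) := by
    rw [hrep, MvPolynomial.coeff_sum, Finset.sum_eq_single m]
    · rw [MvPolynomial.coeff_monomial, if_pos rfl]
    · intro s hs hsm
      rw [MvPolynomial.coeff_monomial]
      split_ifs with he
      · by_cases hsj : s j = 0
        · simp [hsj]
        · exfalso
          apply hsm
          ext l
          have := DFunLike.congr_fun he l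
          rw [Finsupp.tsub_apply, Finsupp.tsub_apply] at this
          by_cases hl : l = j
          · subst hl; simp only [Finsupp.single_eq_same] at this ⊢; omega
          · simp only [Finsupp.single_eq_of_ne' (Ne.symm hl)] at this; omega
      · rfl
    · intro hns; exact absurd hm hns
  rw [h0] at hco
  simp only [MvPolynomial.coeff_zero] at hco
  have := MvPolynomial.mem_support_iff.mp hm
  have : MvPolynomial.coeff m g * (m j : ℝ) ≠ 0 :=
    mul_ne_zero this (Nat.cast_ne_zero.mpr hj)
  exact this hco.symm

open scoped Classical
open Matrix

theorem stmt14 {d r : ℕ} (hd : 1 ≤ d) (hr : 1 ≤ r)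
    (g : MvPolynomial (Fin d) ℝ) (hg : g ≠ 0) (hdeg : g.totalDegree < r)
    (L : Finset ((Fin d → ℝ) × (Fin d → ℝ))) (hLne : L.Nonempty)
    (hv : ∀ ℓ ∈ L, ℓ.2 ≠ 0)
    (hvan : ∀ ℓ ∈ L, ∀ t : ℝ, MvPolynomial.eval (ℓ.1 + t • ℓ.2) g = 0)
    (hmin : ∀ h : MvPolynomial (Fin d) ℝ, h ≠ 0 →
      (∀ ℓ ∈ L, ∀ t : ℝ, MvPolynomial.eval (ℓ.1 + t • ℓ.2) h = 0) →
      g.totalDegree ≤ h.totalDegree)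
    (P : Finset (Fin d → ℝ))
    (hrich : ∀ ℓ ∈ L, r ≤ (P.filter (fun x => x ∈ lineSet ℓ.1 ℓ.2)).card) :
    ¬ ∀ p ∈ P, (∃ ℓ ∈ L, p ∈ lineSet ℓ.1 ℓ.2) →
      Submodule.span ℝ
        {w : Fin d → ℝ | ∃ ℓ ∈ L, ℓ.2 = w ∧ p ∈ lineSet ℓ.1 ℓ.2} = ⊤ := by
  intro hJ
  -- Step 0: g is not constant
  have h0 : g.totalDegree ≠ 0 := by
    intro h0
    obtain ⟨ℓ, hℓ⟩ := hLne
    have hc := hvan ℓ hℓ 0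
    rw [eq_C_of_totalDegree_eq_zero h0, MvPolynomial.eval_C] at hc
    exact hg (by rw [eq_C_of_totalDegree_eq_zero h0, hc, map_zero])
  -- Step 1: the gradient of g vanishes at every point of P on a line of L
  have hgrad : ∀ p ∈ P, (∃ ℓ ∈ L, p ∈ lineSet ℓ.1 ℓ.2) →
      ∀ j, MvPolynomial.eval p (MvPolynomial.pderiv j g) = 0 := by
    intro p hp hpl j
    have hspan := hJ p hp hpl
    set F : (Fin d → ℝ) →ₗ[ℝ] ℝ :=
      { toFun := fun w => ∑ i, w i * MvPolynomial.eval p (MvPolynomial.pderiv i g)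
        map_add' := by intro x y; simp [add_mul, Finset.sum_add_distrib]
        map_smul' := by intro c x; simp [Finset.mul_sum, mul_assoc] } with hF
    have hker : {w : Fin d → ℝ | ∃ ℓ ∈ L, ℓ.2 = w ∧ p ∈ lineSet ℓ.1 ℓ.2} ⊆
        (LinearMap.ker F : Set (Fin d → ℝ)) := by
      rintro w ⟨ℓ, hℓ, rfl, t0, hp0⟩
      have hq : lineComp ℓ.1 ℓ.2 g = 0 :=
        Polynomial.funext fun t => by
          rw [lineComp_eval, hvan ℓ hℓ t, Polynomial.eval_zero]
      have hder := lineComp_derivative ℓ.1 ℓ.2 g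
      rw [hq, map_zero] at hder
      have h2 := lineComp_eval ℓ.1 ℓ.2
        (∑ i, MvPolynomial.C (ℓ.2 i) * MvPolynomial.pderiv i g) t0
      rw [← hder, Polynomial.eval_zero] at h2
      rw [map_sum] at h2
      simp only [MvPolynomial.eval_mul, MvPolynomial.eval_C] at h2
      rw [← hp0] at h2
      simp only [SetLike.mem_coe, LinearMap.mem_ker]
      rw [hF]
      exact h2.symm
    have hFzero : F = 0 := by
      have : LinearMap.ker F = ⊤ :=
        top_unique (hspan ▸ Submodule.span_le.mpr hker)
      exact LinearMap.ker_eq_top.mp this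
    have := congrFun (congrArg (DFunLike.coe) hFzero) (Pi.single j 1)
    simp only [LinearMap.zero_apply] at this
    rw [hF] at this
    simp only [LinearMap.coe_mk, AddHom.coe_mk] at this
    rw [Finset.sum_eq_single j (fun i _ hi => by simp [Pi.single_eq_of_ne hi])
      (fun hj => absurd (Finset.mem_univ j) hj)] at this
    simpa using this
  -- Step 2: each partial derivative vanishes on every line of L
  have hpd : ∀ j, ∀ ℓ ∈ L, ∀ t : ℝ,
      MvPolynomial.eval (ℓ.1 + t • ℓ.2) (MvPolynomial.pderiv j g) = 0 := by
    intro j ℓ hℓ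
    suffices hz : lineComp ℓ.1 ℓ.2 (MvPolynomial.pderiv j g) = 0 by
      intro t
      rw [← lineComp_eval, hz, Polynomial.eval_zero]
    obtain ⟨k, hk⟩ : ∃ k, ℓ.2 k ≠ 0 := by
      by_contra hc; push_neg at hc
      exact hv ℓ hℓ (funext hc)
    set S := P.filter (fun x => x ∈ lineSet ℓ.1 ℓ.2) with hS
    set τ : (Fin d → ℝ) → ℝ := fun x => (x k - ℓ.1 k) / ℓ.2 k with hτdef
    have hτ : ∀ x ∈ S, ℓ.1 + τ x • ℓ.2 = x := by
      intro x hx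
      obtain ⟨t, rfl⟩ := (Finset.mem_filter.mp hx).2
      have ht : τ (ℓ.1 + t • ℓ.2) = t := by
        rw [hτdef]
        simp only [Pi.add_apply, Pi.smul_apply, smul_eq_mul]
        field_simp
        ring
      rw [ht]
    apply Polynomial.eq_zero_of_natDegree_lt_card_of_eval_eq_zero' _ (S.image τ)
    · intro t0 ht0
      obtain ⟨x, hx, rfl⟩ := Finset.mem_image.mp ht0
      rw [lineComp_eval, hτ x hx]
      exact hgrad x (Finset.mem_filter.mp hx).1
        ⟨ℓ, hℓ, (Finset.mem_filter.mp hx).2⟩ j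
    · have hcard : S.card = (S.image τ).card :=
        (Finset.card_image_of_injOn
          (fun x hx y hy hxy => by rw [← hτ x hx, ← hτ y hy, hxy])).symm
      have hle : (lineComp ℓ.1 ℓ.2 (MvPolynomial.pderiv j g)).natDegree ≤
          (MvPolynomial.pderiv j g).totalDegree := lineComp_natDegree_le _ _ _
      have hle2 : (MvPolynomial.pderiv j g).totalDegree ≤ g.totalDegree := by
        by_cases hz : MvPolynomial.pderiv j g = 0
        · rw [hz]; simp
        · exact (totalDegree_pderiv_lt j hz).le
      have hr2 := hrich ℓ hℓ
      rw [← hS] at hr2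
      omega
  -- Step 3: contradiction with minimality
  obtain ⟨j, hj⟩ := exists_pderiv_ne_zero h0
  exact absurd (hmin (MvPolynomial.pderiv j g) hj (hpd j))
    (not_le.mpr (totalDegree_pderiv_lt j hj))
end
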